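/- For subspaces and a unit vector: if Y₀ and Y are matrices with ‖Y − Y₀‖ ≤ δ in operator norm, rank Y₀ = rank Y = r, and the r-th singular value of Y₀ satisfies s_r(Y₀) > 2δ, then for any unit vector a, |sin∠(a, Ran Y) − sin∠(a, Ran Y₀)| ≤ 2δ / (s_r(Y₀) − δ), where sin∠(a, V) = ‖(I − Π_V) a‖ and Π_V is the orthogonal projection onto V. -/

import Mathlib

open scoped Matrix.Norms.L2Operator

/-- `sin` of the angle between a vector and a subspace: `‖(I − Π_V) a‖`ratio-free
(for unit vectors this is the sine of the principal angle). -/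
noncomputable def sinAngleVec {L : ℕ} (a : EuclideanSpace ℂ (Fin L))
    (V : Submodule ℂ (EuclideanSpace ℂ (Fin L))) : ℝ :=
  ‖a - (Submodule.orthogonalProjectionOnto V a : EuclideanSpace ℂ (Fin L))‖

/-- The `r`-th largest singular value of a matrix (1-indexed), i.e. the `r`-th largest
square root of an eigenvalue of `Yᴴ Y`. -/
noncomputable def nthSingularValue {L M : ℕ} (Y : Matrix (Fin L) (Fin M) ℂ) (r : ℕ) : ℝ :=
  ((Finset.univ.val.map fun i : Fin M =>
      Real.sqrt ((Matrix.isHermitian_conjTranspose_mul_self Y).eigenvalues i)).sort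
    (· ≥ ·)).getD (r - 1) 0

/-- Column span of a matrix, viewed inside Euclidean space. -/
noncomputable def colSpan {L M : ℕ} (Y : Matrix (Fin L) (Fin M) ℂ) :
    Submodule ℂ (EuclideanSpace ℂ (Fin L)) :=
  Submodule.span ℂ (Set.range fun q : Fin M => (WithLp.toLp 2 (fun p => Y p q) : EuclideanSpace ℂ (Fin L)))

section Aux

open Matrix
open scoped ComplexOrder

lemma aux_sorted_nonpos_of_countP (l : List ℝ) (hl : l.Pairwise (· ≥ ·)) (r : ℕ)
    (hc : l.countP (fun x => decide (0 < x)) = r) :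
    ∀ j, r ≤ j → l.getD j 0 ≤ 0 := by
  induction l generalizing r with
  | nil => intro j _; simp
  | cons a t ih =>
    rw [List.pairwise_cons] at hl
    intro j hj
    by_cases h0 : 0 < a
    · rw [List.countP_cons_of_pos (by simpa using h0)] at hc
      subst hc
      cases j with
      | zero => exact absurd hj (Nat.not_succ_le_zero _)
      | succ j => exact ih hl.2 _ rfl j (Nat.le_of_succ_le_succ hj)
    · have ha0 : a ≤ 0 := not_lt.mp h0
      cases j with
      | zero => simpa using ha0
      | succ j =>
        have ht0 : t.countP (fun x => decide (0 < x)) = 0 := by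
          rw [List.countP_eq_zero]
          intro x hx
          simpa using not_lt.mpr ((hl.1 x hx).trans ha0)
        exact ih hl.2 0 ht0 j (Nat.zero_le _)

lemma aux_sinAngleVec_le_norm_sub {L : ℕ} (a : EuclideanSpace ℂ (Fin L))
    (W : Submodule ℂ (EuclideanSpace ℂ (Fin L))) (w : EuclideanSpace ℂ (Fin L)) (hw : w ∈ W) :
    sinAngleVec a W ≤ ‖a - w‖ := by
  rw [sinAngleVec, ← Submodule.starProjection_apply, Submodule.starProjection_minimal]
  exact ciInf_le_of_le ⟨0, fun x hx => by rcases hx with ⟨y, rfl⟩; positivity⟩ ⟨w, hw⟩ le_rfl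

lemma aux_sinAngleVec_le_add {L : ℕ} (a : EuclideanSpace ℂ (Fin L)) (ha : ‖a‖ = 1)
    (V W : Submodule ℂ (EuclideanSpace ℂ (Fin L))) (c : ℝ) (hc : 0 ≤ c)
    (h : ∀ v ∈ V, ∃ w ∈ W, ‖v - w‖ ≤ c * ‖v‖) :
    sinAngleVec a W ≤ sinAngleVec a V + c := by
  set v : EuclideanSpace ℂ (Fin L) := (Submodule.orthogonalProjectionOnto V a : EuclideanSpace ℂ (Fin L)) with hv
  obtain ⟨w, hwW, hw⟩ := h v (Submodule.orthogonalProjectionOnto V a).2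
  calc sinAngleVec a W ≤ ‖a - w‖ := aux_sinAngleVec_le_norm_sub a W w hwW
    _ ≤ ‖a - v‖ + ‖v - w‖ := norm_sub_le_norm_sub_add_norm_sub a v w
    _ ≤ sinAngleVec a V + c * ‖v‖ := by exact add_le_add le_rfl hw
    _ ≤ sinAngleVec a V + c := by
        have hv1 : ‖v‖ ≤ 1 := by
          have := (Submodule.orthogonalProjectionOnto V).le_opNorm a
          calc ‖v‖ = ‖Submodule.orthogonalProjectionOnto V a‖ := rfl
            _ ≤ ‖Submodule.orthogonalProjectionOnto V‖ * ‖a‖ := this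
            _ ≤ 1 * 1 := by
                exact mul_le_mul (Submodule.orthogonalProjectionOnto_norm_le _) ha.le (norm_nonneg _) zero_le_one
            _ = 1 := one_mul 1
        nlinarith

lemma aux_singular_facts {L M r : ℕ} (A : Matrix (Fin L) (Fin M) ℂ) (hr : A.rank = r)
    (hs : 0 < nthSingularValue A r) :
    ∀ i : Fin M, (Matrix.isHermitian_conjTranspose_mul_self A).eigenvalues i ≠ 0 →
      nthSingularValue A r ≤
        Real.sqrt ((Matrix.isHermitian_conjTranspose_mul_self A).eigenvalues i) := by
  have hH := Matrix.isHermitian_conjTranspose_mul_self A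
  set lam := hH.eigenvalues with hlam
  have hcard : Fintype.card {i // lam i ≠ 0} = r := by
    rw [← hH.rank_eq_card_non_zero_eigs, Matrix.rank_conjTranspose_mul_self, hr]
  set m : Multiset ℝ := Finset.univ.val.map fun i : Fin M => Real.sqrt (lam i) with hm
  set l := m.sort (· ≥ ·) with hl
  have hlsorted : l.Pairwise (· ≥ ·) := Multiset.pairwise_sort _ _
  have hlm : (l : Multiset ℝ) = m := Multiset.sort_eq _ _
  have hiff : ∀ i : Fin M, (0 < Real.sqrt (lam i)) ↔ lam i ≠ 0 := fun i => by
    rw [Real.sqrt_pos]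
    exact ⟨fun h => ne_of_gt h,
      fun h => lt_of_le_of_ne (A.eigenvalues_conjTranspose_mul_self_nonneg i) (Ne.symm h)⟩
  have hcount : l.countP (fun x => decide (0 < x)) = r := by
    have h1 : l.countP (fun x => decide (0 < x))
        = Multiset.countP (fun x => 0 < x) (l : Multiset ℝ) := by
      simp [Multiset.coe_countP]
    rw [h1, hlm, hm, Multiset.countP_map]
    rw [Multiset.filter_congr (fun i _ => (hiff i))]
    rw [← hcard, Fintype.card_subtype]
    rfl
  have hnonpos := aux_sorted_nonpos_of_countP l hlsorted r hcount
  have hsv : nthSingularValue A r = l.getD (r-1) 0 := rfl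
  have hr1 : 1 ≤ r := by
    by_contra h
    push_neg at h
    interval_cases r
    exact absurd (hsv ▸ hnonpos 0 le_rfl) (not_le.mpr hs)
  have hrlen : r ≤ l.length := hcount ▸ List.countP_le_length
  intro i hi
  have hmem : Real.sqrt (lam i) ∈ l := by
    rw [← Multiset.mem_coe, hlm, hm]
    exact Multiset.mem_map.mpr ⟨i, Finset.mem_univ_val _, rfl⟩
  obtain ⟨j, hjget⟩ := List.mem_iff_get.mp hmem
  have hjr : (j : ℕ) < r := by
    by_contra h
    push_neg at h
    have := hnonpos j h
    rw [List.getD_eq_getElem l 0 j.isLt, ← List.get_eq_getElem, hjget] at this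
    exact absurd this (not_le.mpr ((hiff i).mpr hi))
  have hidx : r - 1 < l.length := lt_of_lt_of_le (Nat.sub_lt hr1 one_pos) hrlen
  have hle : l.get j ≥ l.get ⟨r - 1, hidx⟩ := by
    refine hlsorted.rel_get_of_le ?_
    show (j : ℕ) ≤ r - 1
    exact Nat.le_sub_one_of_lt hjr
  calc nthSingularValue A r = l.get ⟨r - 1, hidx⟩ := by
        rw [hsv, List.getD_eq_getElem l 0 hidx]; rfl
    _ ≤ l.get j := hle
    _ = Real.sqrt (lam i) := hjget

lemma aux_exists_good_subspace {L M r : ℕ} (A : Matrix (Fin L) (Fin M) ℂ) (hr : A.rank = r)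
    (hs : 0 < nthSingularValue A r) :
    ∃ S : Submodule ℂ (EuclideanSpace ℂ (Fin M)), Module.finrank ℂ S = r ∧
      ∀ x ∈ S, nthSingularValue A r * ‖x‖ ≤ ‖Matrix.toEuclideanLin A x‖ := by
  have hH := Matrix.isHermitian_conjTranspose_mul_self A
  set lam := hH.eigenvalues with hlam
  set B := hH.eigenvectorBasis with hB
  have hcard : Fintype.card {i // lam i ≠ 0} = r := by
    rw [← hH.rank_eq_card_non_zero_eigs, Matrix.rank_conjTranspose_mul_self, hr]
  set s := nthSingularValue A r with hsdef
  have hK2 := aux_singular_facts A hr hs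
  set v : {i // lam i ≠ 0} → EuclideanSpace ℂ (Fin M) := fun i => B i.1 with hv
  have hON : Orthonormal ℂ v := B.orthonormal.comp _ Subtype.val_injective
  refine ⟨Submodule.span ℂ (Set.range v), ?_, ?_⟩
  · rw [finrank_span_eq_card hON.linearIndependent, hcard]
  · intro x hx
    have hperp : ∀ i : Fin M, lam i = 0 → B.repr x i = 0 := by
      intro i hi
      rw [B.repr_apply_apply]
      induction hx using Submodule.span_induction with
      | mem y hy =>
        obtain ⟨j, rfl⟩ := hy
        exact B.orthonormal.2 (fun h : i = j.1 => j.2 (h ▸ hi))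
      | zero => simp
      | add y z _ _ hy hz => rw [inner_add_right, hy, hz, add_zero]
      | smul c y _ hy => rw [inner_smul_right, hy, mul_zero]
    have hAx : ‖Matrix.toEuclideanLin A x‖ ^ 2
        = RCLike.re (inner ℂ x (Matrix.toEuclideanLin (Aᴴ * A) x) : ℂ) := by
      have hcomp : Matrix.toEuclideanLin (Aᴴ * A) x
          = Matrix.toEuclideanLin Aᴴ (Matrix.toEuclideanLin A x) := by
        show (WithLp.equiv 2 _).symm ((Aᴴ * A) *ᵥ x) = _
        simp [← Matrix.mulVec_mulVec]
        rfl
      rw [hcomp, Matrix.toEuclideanLin_conjTranspose_eq_adjoint,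
        LinearMap.adjoint_inner_right]
      rw [inner_self_eq_norm_sq (𝕜 := ℂ)]
    have hHB : ∀ i : Fin M, Matrix.toEuclideanLin (Aᴴ * A) (B i) = (lam i : ℂ) • B i := by
      intro i
      have h1 := hH.mulVec_eigenvectorBasis i
      show (WithLp.equiv 2 _).symm ((Aᴴ * A) *ᵥ _) = _
      rw [RCLike.real_smul_eq_coe_smul (K := ℂ)] at h1
      exact congrArg (WithLp.equiv 2 _).symm h1
    have hrepr : ∀ k : Fin M,
        B.repr (Matrix.toEuclideanLin (Aᴴ * A) x) k = (lam k : ℂ) * B.repr x k := by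
      intro k
      conv_lhs => rw [← B.sum_repr x]
      rw [map_sum, map_sum]
      rw [WithLp.ofLp_sum, Finset.sum_apply]
      have : ∀ i : Fin M, B.repr (Matrix.toEuclideanLin (Aᴴ * A) (B.repr x i • B i)) k
          = B.repr x i * ((lam i : ℂ) * B.repr (B i) k) := by
        intro i
        rw [LinearMap.map_smul, hHB i, LinearIsometryEquiv.map_smul, LinearIsometryEquiv.map_smul]
        simp [smul_eq_mul]
      simp_rw [this]
      simp [B.repr_self, EuclideanSpace.single_apply]
      exact mul_comm _ _
    have hinner : RCLike.re (inner ℂ x (Matrix.toEuclideanLin (Aᴴ * A) x) : ℂ)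
        = ∑ i : Fin M, lam i * ‖B.repr x i‖ ^ 2 := by
      rw [← B.repr.inner_map_map x (Matrix.toEuclideanLin (Aᴴ * A) x)]
      rw [PiLp.inner_apply]
      rw [map_sum]
      refine Finset.sum_congr rfl fun i _ => ?_
      rw [hrepr i]
      have : (lam i : ℂ) * B.repr x i * (starRingEnd ℂ) (B.repr x i)
          = (lam i : ℂ) * ((starRingEnd ℂ) (B.repr x i) * B.repr x i) := by ring
      rw [RCLike.inner_apply, this, Complex.conj_mul', ← Complex.ofReal_pow,
        ← Complex.ofReal_mul]
      exact Complex.ofReal_re _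
    have hnormsq : ‖x‖ ^ 2 = ∑ i : Fin M, ‖B.repr x i‖ ^ 2 := by
      rw [← B.repr.norm_map x, EuclideanSpace.norm_eq, Real.sq_sqrt (by positivity)]
    have hpt : ∀ i : Fin M, s ^ 2 * ‖B.repr x i‖ ^ 2 ≤ lam i * ‖B.repr x i‖ ^ 2 := by
      intro i
      by_cases hzero : lam i = 0
      · rw [hperp i hzero]
        simp [hzero]
      · have h1 : s ≤ Real.sqrt (lam i) := hK2 i hzero
        have h2 : s ^ 2 ≤ lam i := by
          have := pow_le_pow_left₀ hs.le h1 2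
          rwa [Real.sq_sqrt (A.eigenvalues_conjTranspose_mul_self_nonneg i)] at this
        exact mul_le_mul_of_nonneg_right h2 (by positivity)
    have hfinal : (s * ‖x‖) ^ 2 ≤ ‖Matrix.toEuclideanLin A x‖ ^ 2 := by
      rw [mul_pow, hnormsq, hAx, hinner, Finset.mul_sum]
      exact Finset.sum_le_sum fun i _ => hpt i
    exact le_of_pow_le_pow_left₀ two_ne_zero (norm_nonneg _) hfinal

lemma aux_toEuclideanLin_eq {L M : ℕ} (A : Matrix (Fin L) (Fin M) ℂ) :
    Matrix.toEuclideanLin A = ((WithLp.linearEquiv 2 ℂ (Fin L → ℂ)).symm.toLinearMap ∘ₗ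
      A.mulVecLin) ∘ₗ (WithLp.linearEquiv 2 ℂ (Fin M → ℂ)).toLinearMap := rfl

lemma aux_colSpan_eq_range {L M : ℕ} (A : Matrix (Fin L) (Fin M) ℂ) :
    colSpan A = LinearMap.range (Matrix.toEuclideanLin A) := by
  rw [aux_toEuclideanLin_eq, LinearMap.range_comp_of_range_eq_top _ (LinearEquiv.range _),
    LinearMap.range_comp, Matrix.range_mulVecLin, Submodule.map_span, colSpan, ← Set.range_comp]
  rfl

lemma aux_exists_preimage {L M r : ℕ} (B : Matrix (Fin L) (Fin M) ℂ) (hrB : B.rank = r)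
    (S : Submodule ℂ (EuclideanSpace ℂ (Fin M))) (hS : Module.finrank ℂ S = r)
    (σ : ℝ) (hσ : 0 < σ) (hlow : ∀ x ∈ S, σ * ‖x‖ ≤ ‖Matrix.toEuclideanLin B x‖) :
    ∀ v ∈ colSpan B, ∃ x ∈ S, Matrix.toEuclideanLin B x = v ∧ σ * ‖x‖ ≤ ‖v‖ := by
  set f := (Matrix.toEuclideanLin B).domRestrict S with hf
  have hker : LinearMap.ker f = ⊥ := by
    rw [LinearMap.ker_eq_bot']
    intro x hx
    have h1 := hlow x.1 x.2
    rw [show Matrix.toEuclideanLin B x.1 = f x from rfl, hx, norm_zero] at h1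
    have : ‖(x : EuclideanSpace ℂ (Fin M))‖ = 0 :=
      le_antisymm (by nlinarith [norm_nonneg (x : EuclideanSpace ℂ (Fin M))]) (norm_nonneg _)
    exact Subtype.ext (norm_eq_zero.mp this)
  have hrange : LinearMap.range f = Submodule.map (Matrix.toEuclideanLin B) S :=
    LinearMap.range_domRestrict S _
  have hfr : Module.finrank ℂ (LinearMap.range f) = r := by
    have := LinearMap.finrank_range_add_finrank_ker f
    rw [hker, finrank_bot, add_zero] at this
    rw [this, hS]
  have hle : Submodule.map (Matrix.toEuclideanLin B) S ≤ colSpan B := by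
    rw [aux_colSpan_eq_range]
    rintro v ⟨x, -, rfl⟩
    exact ⟨x, rfl⟩
  have hcs : Module.finrank ℂ (colSpan B) = r := by
    rw [aux_colSpan_eq_range, aux_toEuclideanLin_eq,
      LinearMap.range_comp_of_range_eq_top _ (LinearEquiv.range _), LinearMap.range_comp,
      LinearEquiv.finrank_map_eq]
    exact hrB
  have heq : Submodule.map (Matrix.toEuclideanLin B) S = colSpan B :=
    Submodule.eq_of_le_of_finrank_le hle (by rw [hcs, ← hrange, hfr])
  intro v hv
  rw [← heq] at hv
  obtain ⟨x, hxS, hxv⟩ := hv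
  refine ⟨x, hxS, hxv, ?_⟩
  rw [← hxv]
  exact hlow x hxS

end Aux

/-- Wedin-type perturbation bound: if `‖Y − Y₀‖ ≤ δ` in operator norm, both have rank `r`,
and `s_r(Y₀) > 2δ`, then for any unit vector `a`,
`|sin∠(a, Ran Y) − sin∠(a, Ran Y₀)| ≤ 2δ/(s_r(Y₀) − δ)`. -/
theorem wedin_angle_perturbation {L M : ℕ} (Y₀ Y : Matrix (Fin L) (Fin M) ℂ)
    (δ : ℝ) (hδ : ‖Y - Y₀‖ ≤ δ) (r : ℕ)
    (hr₀ : Y₀.rank = r) (hr : Y.rank = r)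
    (hs : nthSingularValue Y₀ r > 2 * δ)
    (a : EuclideanSpace ℂ (Fin L)) (ha : ‖a‖ = 1) :
    |sinAngleVec a (colSpan Y) - sinAngleVec a (colSpan Y₀)| ≤
      2 * δ / (nthSingularValue Y₀ r - δ) := by
  have hδ0 : 0 ≤ δ := le_trans (norm_nonneg _) hδ
  set s := nthSingularValue Y₀ r with hsdef
  have hs0 : 0 < s := lt_of_le_of_lt (by linarith) hs
  have hsδ : 0 < s - δ := by linarith
  obtain ⟨S, hSr, hSlow⟩ := aux_exists_good_subspace Y₀ hr₀ hs0
  have hop : ∀ (A : Matrix (Fin L) (Fin M) ℂ) (x : EuclideanSpace ℂ (Fin M)),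
      ‖Matrix.toEuclideanLin A x‖ ≤ ‖A‖ * ‖x‖ := fun A x => Matrix.l2_opNorm_mulVec A x
  have hYlow : ∀ x ∈ S, (s - δ) * ‖x‖ ≤ ‖Matrix.toEuclideanLin Y x‖ := by
    intro x hxS
    have h1 := hSlow x hxS
    have h2 : ‖Matrix.toEuclideanLin (Y - Y₀) x‖ ≤ δ * ‖x‖ :=
      le_trans (hop _ x) (mul_le_mul_of_nonneg_right hδ (norm_nonneg _))
    have h3 : Matrix.toEuclideanLin (Y - Y₀) x
        = Matrix.toEuclideanLin Y x - Matrix.toEuclideanLin Y₀ x := by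
      rw [map_sub]; rfl
    have h4 : ‖Matrix.toEuclideanLin Y₀ x‖
        ≤ ‖Matrix.toEuclideanLin Y x‖ + ‖Matrix.toEuclideanLin (Y - Y₀) x‖ := by
      rw [h3]
      have := norm_sub_le (Matrix.toEuclideanLin Y x)
        (Matrix.toEuclideanLin Y x - Matrix.toEuclideanLin Y₀ x)
      simpa using this
    nlinarith [norm_nonneg x]
  have hpre₀ := aux_exists_preimage Y₀ hr₀ S hSr s hs0 hSlow
  have hpre := aux_exists_preimage Y hr S hSr (s - δ) hsδ hYlow
  have happrox1 : ∀ v ∈ colSpan Y₀, ∃ w ∈ colSpan Y, ‖v - w‖ ≤ (δ / s) * ‖v‖ := by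
    intro v hv
    obtain ⟨x, hxS, hxv, hxb⟩ := hpre₀ v hv
    refine ⟨Matrix.toEuclideanLin Y x, by rw [aux_colSpan_eq_range]; exact ⟨x, rfl⟩, ?_⟩
    have hvw : v - Matrix.toEuclideanLin Y x = Matrix.toEuclideanLin (Y₀ - Y) x := by
      rw [map_sub, ← hxv]; rfl
    rw [hvw]
    have hxle : ‖x‖ ≤ ‖v‖ / s := (le_div_iff₀ hs0).mpr (by linarith [hxb])
    calc ‖Matrix.toEuclideanLin (Y₀ - Y) x‖ ≤ ‖Y₀ - Y‖ * ‖x‖ := hop _ x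
      _ ≤ δ * ‖x‖ := by
          rw [norm_sub_rev]
          exact mul_le_mul_of_nonneg_right hδ (norm_nonneg _)
      _ ≤ δ * (‖v‖ / s) := mul_le_mul_of_nonneg_left hxle hδ0
      _ = (δ / s) * ‖v‖ := by ring
  have happrox2 : ∀ v ∈ colSpan Y, ∃ w ∈ colSpan Y₀, ‖v - w‖ ≤ (δ / (s - δ)) * ‖v‖ := by
    intro v hv
    obtain ⟨x, hxS, hxv, hxb⟩ := hpre v hv
    refine ⟨Matrix.toEuclideanLin Y₀ x, by rw [aux_colSpan_eq_range]; exact ⟨x, rfl⟩, ?_⟩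
    have hvw : v - Matrix.toEuclideanLin Y₀ x = Matrix.toEuclideanLin (Y - Y₀) x := by
      rw [map_sub, ← hxv]; rfl
    rw [hvw]
    have hxle : ‖x‖ ≤ ‖v‖ / (s - δ) := (le_div_iff₀ hsδ).mpr (by linarith [hxb])
    calc ‖Matrix.toEuclideanLin (Y - Y₀) x‖ ≤ ‖Y - Y₀‖ * ‖x‖ := hop _ x
      _ ≤ δ * ‖x‖ := mul_le_mul_of_nonneg_right hδ (norm_nonneg _)
      _ ≤ δ * (‖v‖ / (s - δ)) := mul_le_mul_of_nonneg_left hxle hδ0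
      _ = (δ / (s - δ)) * ‖v‖ := by ring
  have hb1 : sinAngleVec a (colSpan Y) ≤ sinAngleVec a (colSpan Y₀) + δ / s :=
    aux_sinAngleVec_le_add a ha _ _ _ (by positivity) happrox1
  have hb2 : sinAngleVec a (colSpan Y₀) ≤ sinAngleVec a (colSpan Y) + δ / (s - δ) :=
    aux_sinAngleVec_le_add a ha _ _ _ (by positivity) happrox2
  have hc1 : δ / s ≤ 2 * δ / (s - δ) := by
    rw [div_le_div_iff₀ hs0 hsδ]
    nlinarith
  have hc2 : δ / (s - δ) ≤ 2 * δ / (s - δ) := by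
    rw [div_le_div_iff₀ hsδ hsδ]
    nlinarith
  rw [abs_sub_le_iff]
  constructor <;> linarith
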